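/- Let M be a d×d positive definite real matrix with minimal eigenvalue at least b, for a positive integer b, and let x_1,...,x_b ∈ ℝ^d with ‖x_j‖ ≤ 1 for all j. Define M_j = M + x_1 x_1ᵀ + ... + x_j x_jᵀ. Then Σ_{j=1}^b x_jᵀ M⁻¹ x_j ≤ e · Σ_{j=1}^b x_jᵀ M_j⁻¹ x_j, where e is the base of natural logarithms. -/

import Mathlib

open Matrix Finset


lemma quad_vecMulVec {d : ℕ} (w v : Fin d → ℝ) :
    v ⬝ᵥ (vecMulVec w w).mulVec v = (w ⬝ᵥ v) ^ 2 := by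
  simp only [vecMulVec, mulVec, dotProduct, of_apply, sq]
  rw [Finset.sum_mul_sum]
  apply Finset.sum_congr rfl; intro i _
  rw [Finset.mul_sum]
  apply Finset.sum_congr rfl; intro j _
  ring

lemma psd_vecMulVec {d : ℕ} (w : Fin d → ℝ) : (vecMulVec w w).PosSemidef := by
  apply Matrix.PosSemidef.of_dotProduct_mulVec_nonneg
  · ext i j; simp [vecMulVec, conjTranspose, mul_comm]
  · intro v
    show (0:ℝ) ≤ star v ⬝ᵥ (vecMulVec w w).mulVec v
    rw [show star v = v from rfl, quad_vecMulVec]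
    positivity

lemma quad_sum {d : ℕ} (v : Fin d → ℝ) (s : Finset ℕ) (A : ℕ → Matrix (Fin d) (Fin d) ℝ) :
    v ⬝ᵥ (∑ i ∈ s, A i).mulVec v = ∑ i ∈ s, v ⬝ᵥ (A i).mulVec v := by
  induction s using Finset.cons_induction with
  | empty => simp
  | cons a s ha ih => rw [Finset.sum_cons, Finset.sum_cons, add_mulVec, dotProduct_add, ih]

lemma quad_symm {d : ℕ} {A : Matrix (Fin d) (Fin d) ℝ} (hA : A.IsHermitian) (p q : Fin d → ℝ) :
    p ⬝ᵥ A.mulVec q = q ⬝ᵥ A.mulVec p := by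
  rw [dotProduct_mulVec, dotProduct_comm, ← mulVec_transpose]
  rw [show Aᵀ = A from by simpa using hA.eq]

lemma inv_quad_anti {d : ℕ} {A B : Matrix (Fin d) (Fin d) ℝ} (hA : A.PosDef) (hB : B.PosDef)
    (h : ∀ v, v ⬝ᵥ A.mulVec v ≤ v ⬝ᵥ B.mulVec v) (x : Fin d → ℝ) :
    x ⬝ᵥ B⁻¹.mulVec x ≤ x ⬝ᵥ A⁻¹.mulVec x := by
  set p := A⁻¹.mulVec x with hp
  set q := B⁻¹.mulVec x with hq
  have hAp : A.mulVec p = x := by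
    rw [hp, mulVec_mulVec, Matrix.mul_nonsing_inv _ hA.det_pos.ne'.isUnit, one_mulVec]
  have hBq : B.mulVec q = x := by
    rw [hq, mulVec_mulVec, Matrix.mul_nonsing_inv _ hB.det_pos.ne'.isUnit, one_mulVec]
  have hα : x ⬝ᵥ p = p ⬝ᵥ A.mulVec p := by rw [hAp, dotProduct_comm]
  have hβ : x ⬝ᵥ q = q ⬝ᵥ B.mulVec q := by rw [hBq, dotProduct_comm]
  have hα0 : 0 ≤ x ⬝ᵥ p := by
    have := hA.inv.posSemidef.dotProduct_mulVec_nonneg x; simpa using this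
  have hβ0 : 0 ≤ x ⬝ᵥ q := by
    have := hB.inv.posSemidef.dotProduct_mulVec_nonneg x; simpa using this
  have hqAq0 : 0 ≤ q ⬝ᵥ A.mulVec q := hA.posSemidef.dotProduct_mulVec_nonneg q
  have hqAqβ : q ⬝ᵥ A.mulVec q ≤ x ⬝ᵥ q := by rw [hβ]; exact h q
  have hpAq : p ⬝ᵥ A.mulVec q = x ⬝ᵥ q := by
    rw [quad_symm hA.isHermitian p q, hAp, dotProduct_comm]
  -- Cauchy–Schwarz via discriminant
  have hdisc : discrim (q ⬝ᵥ A.mulVec q) (2 * (p ⬝ᵥ A.mulVec q)) (p ⬝ᵥ A.mulVec p) ≤ 0 := by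
    apply discrim_le_zero
    intro t
    have expand : (q ⬝ᵥ A.mulVec q) * (t * t) + (2 * (p ⬝ᵥ A.mulVec q)) * t
        + p ⬝ᵥ A.mulVec p = (p + t • q) ⬝ᵥ A.mulVec (p + t • q) := by
      have hsym := quad_symm hA.isHermitian q p
      simp only [mulVec_add, mulVec_smul, add_mulVec, dotProduct_add, add_dotProduct, mulVec_smul,
        dotProduct_smul, smul_dotProduct, smul_eq_mul]
      rw [hsym]; ring
    rw [expand]
    exact hA.posSemidef.dotProduct_mulVec_nonneg _
  rw [discrim, hpAq, ← hα] at hdisc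
  nlinarith [hdisc, hα0, hβ0, hqAq0, hqAqβ]

lemma psd_sum_vecMulVec {d : ℕ} (x : ℕ → Fin d → ℝ) (s : Finset ℕ) :
    (∑ i ∈ s, vecMulVec (x i) (x i)).PosSemidef := by
  induction s using Finset.cons_induction with
  | empty => simpa using Matrix.PosSemidef.zero
  | cons a s ha ih => rw [Finset.sum_cons]; exact (psd_vecMulVec (x a)).add ih


/-- if `M` is positive definite with minimal eigenvalue at least `b` (expressed
via the quadratic form `vᵀ M v ≥ b ‖v‖²`), and `x_0,…,x_{b-1}` have norm at most one, then
`Σ_j x_jᵀ M⁻¹ x_j ≤ e Σ_j x_jᵀ M_j⁻¹ x_j` where `M_j = M + Σ_{i ≤ j} x_i x_iᵀ`. -/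
theorem sum_quadform_inv_le_exp_mul
    {d : ℕ} (b : ℕ) (hb : 0 < b)
    (M : Matrix (Fin d) (Fin d) ℝ) (hM : M.PosDef)
    (heig : ∀ v : Fin d → ℝ, (b : ℝ) * ∑ i, v i ^ 2 ≤ v ⬝ᵥ M.mulVec v)
    (x : ℕ → Fin d → ℝ) (hx : ∀ j < b, ∑ i, x j i ^ 2 ≤ 1) :
    ∑ j ∈ Finset.range b, x j ⬝ᵥ M⁻¹.mulVec (x j) ≤
      Real.exp 1 * ∑ j ∈ Finset.range b,
        x j ⬝ᵥ (M + ∑ i ∈ Finset.range (j + 1), Matrix.vecMulVec (x i) (x i))⁻¹.mulVec (x j) := by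
  haveI : Invertible (2:ℝ) := invertibleOfNonzero two_ne_zero
  have h2M : ((2:ℝ) • M).PosDef := by
    refine Matrix.PosDef.of_dotProduct_mulVec_pos ?_ (fun v hv => ?_)
    · show ((2:ℝ) • M)ᴴ = (2:ℝ) • M
      rw [conjTranspose_smul, hM.isHermitian.eq]; norm_num
    · rw [smul_mulVec, dotProduct_smul, smul_eq_mul]
      have := hM.dotProduct_mulVec_pos hv
      simp only [star_trivial] at this ⊢
      linarith
  have key : ∀ j < b, x j ⬝ᵥ M⁻¹.mulVec (x j) ≤
      2 * (x j ⬝ᵥ (M + ∑ i ∈ Finset.range (j + 1), vecMulVec (x i) (x i))⁻¹.mulVec (x j)) := by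
    intro j hj
    set S := ∑ i ∈ Finset.range (j + 1), vecMulVec (x i) (x i) with hS
    have hMj : (M + S).PosDef := hM.add_posSemidef (psd_sum_vecMulVec x _)
    have hle : ∀ v, v ⬝ᵥ (M + S).mulVec v ≤ v ⬝ᵥ ((2:ℝ) • M).mulVec v := by
      intro v
      rw [add_mulVec, dotProduct_add, smul_mulVec, dotProduct_smul, smul_eq_mul, two_mul]
      gcongr
      have hSv : v ⬝ᵥ S.mulVec v = ∑ i ∈ Finset.range (j + 1), (x i ⬝ᵥ v) ^ 2 := by
        rw [hS, quad_sum]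
        exact Finset.sum_congr rfl fun i _ => quad_vecMulVec _ _
      have hbound : v ⬝ᵥ S.mulVec v ≤ (j + 1 : ℝ) * ∑ i, v i ^ 2 := by
        rw [hSv]
        calc ∑ i ∈ Finset.range (j + 1), (x i ⬝ᵥ v) ^ 2
            ≤ ∑ i ∈ Finset.range (j + 1), ∑ k, v k ^ 2 := by
              apply Finset.sum_le_sum
              intro i hi
              have hib : i < b := lt_of_lt_of_le (Finset.mem_range.mp hi) hj
              calc (x i ⬝ᵥ v) ^ 2 ≤ (∑ k, x i k ^ 2) * ∑ k, v k ^ 2 :=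
                    Finset.sum_mul_sq_le_sq_mul_sq _ _ _
                _ ≤ 1 * ∑ k, v k ^ 2 := by
                    apply mul_le_mul_of_nonneg_right (hx i hib)
                    positivity
                _ = ∑ k, v k ^ 2 := one_mul _
          _ = (j + 1 : ℝ) * ∑ i, v i ^ 2 := by
              rw [Finset.sum_const, Finset.card_range, nsmul_eq_mul]; push_cast; ring
      calc v ⬝ᵥ S.mulVec v ≤ (j + 1 : ℝ) * ∑ i, v i ^ 2 := hbound
        _ ≤ (b : ℝ) * ∑ i, v i ^ 2 := by
            apply mul_le_mul_of_nonneg_right _ (by positivity)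
            push_cast; exact_mod_cast Nat.cast_le.mpr hj
        _ ≤ v ⬝ᵥ M.mulVec v := heig v
    have hmain := inv_quad_anti hMj h2M hle (x j)
    have hinv : ((2:ℝ) • M)⁻¹ = ⅟(2:ℝ) • M⁻¹ :=
      Matrix.inv_smul (A := M) (2:ℝ) hM.det_pos.ne'.isUnit
    rw [hinv, Matrix.smul_mulVec, dotProduct_smul, smul_eq_mul, invOf_eq_inv] at hmain
    linarith
  have hnn : ∀ j ∈ Finset.range b,
      0 ≤ x j ⬝ᵥ (M + ∑ i ∈ Finset.range (j + 1), vecMulVec (x i) (x i))⁻¹.mulVec (x j) := by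
    intro j hj
    have hMj : (M + ∑ i ∈ Finset.range (j + 1), vecMulVec (x i) (x i)).PosDef :=
      hM.add_posSemidef (psd_sum_vecMulVec x _)
    have := hMj.inv.posSemidef.dotProduct_mulVec_nonneg (x j); simpa using this
  calc ∑ j ∈ Finset.range b, x j ⬝ᵥ M⁻¹.mulVec (x j)
      ≤ ∑ j ∈ Finset.range b, 2 * (x j ⬝ᵥ
          (M + ∑ i ∈ Finset.range (j + 1), vecMulVec (x i) (x i))⁻¹.mulVec (x j)) := by
        apply Finset.sum_le_sum
        intro j hj
        exact key j (Nat.succ_le_of_lt (Finset.mem_range.mp hj))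
    _ = 2 * ∑ j ∈ Finset.range b, x j ⬝ᵥ
          (M + ∑ i ∈ Finset.range (j + 1), vecMulVec (x i) (x i))⁻¹.mulVec (x j) := by
        rw [Finset.mul_sum]
    _ ≤ Real.exp 1 * ∑ j ∈ Finset.range b, x j ⬝ᵥ
          (M + ∑ i ∈ Finset.range (j + 1), vecMulVec (x i) (x i))⁻¹.mulVec (x j) := by
        apply mul_le_mul_of_nonneg_right
        · have := Real.add_one_le_exp 1; linarith
        · exact Finset.sum_nonneg hnn
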